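/- Suppose there is no continuous map α : Ω → (U₄ × U₂) ∖ {(0,0)} satisfying, for all (ξ₁,ξ₂,ξ₃,ξ₄) ∈ Ω, both α(ξ₂,ξ₃,ξ₄,ξ₁) = ω·α(ξ₁,ξ₂,ξ₃,ξ₄) and α(ξ₄,ξ₃,ξ₂,ξ₁) = j·α(ξ₁,ξ₂,ξ₃,ξ₄), where ω·((x₁,x₂,x₃,x₄),(y₁,y₂)) = ((x₂,x₃,x₄,x₁),(y₂,y₁)) and j·((x₁,x₂,x₃,x₄),(y₁,y₂)) = ((x₃,x₂,x₁,x₄),(y₂,y₁)). Then for every injective continuous map f : S² → ℝ³ there exist four pairwise distinct points ξ₁, ξ₂, ξ₃, ξ₄ ∈ S² such that d(f(ξ₁),f(ξ₂)) = d(f(ξ₂),f(ξ₃)) = d(f(ξ₃),f(ξ₄)) = d(f(ξ₄),f(ξ₁)) and d(f(ξ₁),f(ξ₃)) = d(f(ξ₂),f(ξ₄)). -/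

import Mathlib

noncomputable section TetrahedraSetup

/-- The unit sphere `S² ⊆ ℝ³`. -/
abbrev Sph : Type := (Metric.sphere (0 : EuclideanSpace ℝ (Fin 3)) 1)

/-- `X = S² × S² × S² × S²`. -/
abbrev Conf : Type := Sph × Sph × Sph × Sph

/-- `Ω = X \ Y` where `Y = {(x,y,x,y) : x,y ∈ S²}`. -/
def OmegaSet : Set Conf := {p | ¬ (p.1 = p.2.2.1 ∧ p.2.1 = p.2.2.2)}

/-- The ambient space `ℝ⁴ × ℝ²` containing `U₄ × U₂`. -/
abbrev V : Type := WithLp 2 (EuclideanSpace ℝ (Fin 4) × EuclideanSpace ℝ (Fin 2))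

/-- Membership of `v` in `U₄ × U₂`, i.e. both groups of coordinates sum to zero. -/
def memU (v : V) : Prop :=
  v.fst 0 + v.fst 1 + v.fst 2 + v.fst 3 = 0 ∧ v.snd 0 + v.snd 1 = 0

/-- The action of the rotation `ω ∈ D₈` on `U₄ × U₂`:
`ω·((x₁,x₂,x₃,x₄),(y₁,y₂)) = ((x₂,x₃,x₄,x₁),(y₂,y₁))`. -/
def omegaV (v : V) : V :=
  WithLp.toLp 2 ((WithLp.equiv 2 _).symm ![v.fst 1, v.fst 2, v.fst 3, v.fst 0],
   (WithLp.equiv 2 _).symm ![v.snd 1, v.snd 0])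

/-- The action of the reflection `j ∈ D₈` on `U₄ × U₂`:
`j·((x₁,x₂,x₃,x₄),(y₁,y₂)) = ((x₃,x₂,x₁,x₄),(y₂,y₁))`. -/
def jV (v : V) : V :=
  WithLp.toLp 2 ((WithLp.equiv 2 _).symm ![v.fst 2, v.fst 1, v.fst 0, v.fst 3],
   (WithLp.equiv 2 _).symm ![v.snd 1, v.snd 0])

private lemma wlpApply {n : ℕ} (x : Fin n → ℝ) (i : Fin n) :
    ((WithLp.equiv 2 (Fin n → ℝ)).symm x) i = x i := rfl

/-- The test map built from `f`. -/
noncomputable def testAlpha (f : Sph → EuclideanSpace ℝ (Fin 3)) (p : Conf) : V :=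
  WithLp.toLp 2 ((WithLp.equiv 2 _).symm
      ![dist (f p.1) (f p.2.1) - (dist (f p.1) (f p.2.1) + dist (f p.2.1) (f p.2.2.1) +
          dist (f p.2.2.1) (f p.2.2.2) + dist (f p.2.2.2) (f p.1)) / 4,
        dist (f p.2.1) (f p.2.2.1) - (dist (f p.1) (f p.2.1) + dist (f p.2.1) (f p.2.2.1) +
          dist (f p.2.2.1) (f p.2.2.2) + dist (f p.2.2.2) (f p.1)) / 4,
        dist (f p.2.2.1) (f p.2.2.2) - (dist (f p.1) (f p.2.1) + dist (f p.2.1) (f p.2.2.1) +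
          dist (f p.2.2.1) (f p.2.2.2) + dist (f p.2.2.2) (f p.1)) / 4,
        dist (f p.2.2.2) (f p.1) - (dist (f p.1) (f p.2.1) + dist (f p.2.1) (f p.2.2.1) +
          dist (f p.2.2.1) (f p.2.2.2) + dist (f p.2.2.2) (f p.1)) / 4],
   (WithLp.equiv 2 _).symm
      ![dist (f p.1) (f p.2.2.1) - dist (f p.2.1) (f p.2.2.2),
        dist (f p.2.1) (f p.2.2.2) - dist (f p.1) (f p.2.2.1)])

/-- **Proposition 2.1 of Blagojević–Ziegler.** If there is no `D₈`-equivariant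
continuous map `Ω → (U₄ × U₂) \ {(0,0)}`, then for every injective continuous
`f : S² → ℝ³` there are four pairwise distinct points on `S²` whose images span a
tetrahedron with the symmetries of a square. -/
theorem testmap_implies_tetrahedra
    (hyp : ¬ ∃ α : Conf → V,
        ContinuousOn α OmegaSet ∧
        (∀ p ∈ OmegaSet, memU (α p) ∧ α p ≠ 0) ∧
        (∀ ξ₁ ξ₂ ξ₃ ξ₄ : Sph, (ξ₁, ξ₂, ξ₃, ξ₄) ∈ OmegaSet →
          α (ξ₂, ξ₃, ξ₄, ξ₁) = omegaV (α (ξ₁, ξ₂, ξ₃, ξ₄)) ∧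
          α (ξ₄, ξ₃, ξ₂, ξ₁) = jV (α (ξ₁, ξ₂, ξ₃, ξ₄))))
    (f : Sph → EuclideanSpace ℝ (Fin 3))
    (hf_cont : Continuous f) (hf_inj : Function.Injective f) :
    ∃ ξ₁ ξ₂ ξ₃ ξ₄ : Sph,
      ξ₁ ≠ ξ₂ ∧ ξ₁ ≠ ξ₃ ∧ ξ₁ ≠ ξ₄ ∧ ξ₂ ≠ ξ₃ ∧ ξ₂ ≠ ξ₄ ∧ ξ₃ ≠ ξ₄ ∧
      dist (f ξ₁) (f ξ₂) = dist (f ξ₂) (f ξ₃) ∧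
      dist (f ξ₂) (f ξ₃) = dist (f ξ₃) (f ξ₄) ∧
      dist (f ξ₃) (f ξ₄) = dist (f ξ₄) (f ξ₁) ∧
      dist (f ξ₁) (f ξ₃) = dist (f ξ₂) (f ξ₄) := by
  by_contra h
  push_neg at h
  apply hyp
  refine ⟨testAlpha f, ?_, ?_, ?_⟩
  · -- continuity
    apply Continuous.continuousOn
    have c1 : Continuous fun p : Conf => p.1 := continuous_fst
    have c2 : Continuous fun p : Conf => p.2.1 := continuous_fst.comp continuous_snd
    have c3 : Continuous fun p : Conf => p.2.2.1 :=
      continuous_fst.comp (continuous_snd.comp continuous_snd)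
    have c4 : Continuous fun p : Conf => p.2.2.2 :=
      continuous_snd.comp (continuous_snd.comp continuous_snd)
    unfold testAlpha
    refine (WithLp.prod_continuous_toLp 2 _ _).comp (Continuous.prodMk ?_ ?_)
    · refine Continuous.comp (PiLp.continuous_toLp 2 _) ?_
      refine continuous_pi fun i => ?_
      fin_cases i <;> simp <;>
        exact Continuous.sub (by fun_prop) (by fun_prop)
    · refine Continuous.comp (PiLp.continuous_toLp 2 _) ?_
      refine continuous_pi fun i => ?_
      fin_cases i <;> simp <;>
        exact Continuous.sub (by fun_prop) (by fun_prop)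
  · -- memU and nonzero
    rintro ⟨ξ₁, ξ₂, ξ₃, ξ₄⟩ hp
    constructor
    · constructor <;>
      · simp only [testAlpha, wlpApply, WithLp.toLp_fst, WithLp.toLp_snd]
        simp only [Matrix.cons_val_zero, Matrix.cons_val_one, Matrix.head_cons,
          Matrix.cons_val_two, Matrix.tail_cons, Matrix.cons_val_three]
        ring
    · intro h0
      rw [WithLp.ext_iff, Prod.ext_iff] at h0
      obtain ⟨h1, h2⟩ := h0
      have e : ∀ i : Fin 4, (testAlpha f (ξ₁, ξ₂, ξ₃, ξ₄)).ofLp.1 i = 0 := fun i => by rw [h1]; rfl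
      have e2 : ∀ i : Fin 2, (testAlpha f (ξ₁, ξ₂, ξ₃, ξ₄)).ofLp.2 i = 0 := fun i => by rw [h2]; rfl
      have h12 := e 0; have h23 := e 1; have h34 := e 2; have h41 := e 3
      have hd := e2 0
      simp only [testAlpha, wlpApply, WithLp.ofLp_toLp, Matrix.cons_val_zero, Matrix.cons_val_one,
        Matrix.head_cons, Matrix.cons_val_two, Matrix.tail_cons, Matrix.cons_val_three,
        sub_eq_zero] at h12 h23 h34 h41 hd
      have hA : dist (f ξ₁) (f ξ₂) = dist (f ξ₂) (f ξ₃) := by linarith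
      have hB : dist (f ξ₂) (f ξ₃) = dist (f ξ₃) (f ξ₄) := by linarith
      have hC : dist (f ξ₃) (f ξ₄) = dist (f ξ₄) (f ξ₁) := by linarith
      have hΩ : ¬ (ξ₁ = ξ₃ ∧ ξ₂ = ξ₄) := hp
      have feq : ∀ a b : Sph, dist (f a) (f b) = 0 → a = b := fun a b h0 =>
        hf_inj (by rwa [dist_eq_zero] at h0)
      have h13 : ξ₁ ≠ ξ₃ := by
        intro he
        have hz : dist (f ξ₁) (f ξ₃) = 0 := by rw [he, dist_self]
        exact hΩ ⟨he, feq _ _ (by linarith)⟩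
      have h24 : ξ₂ ≠ ξ₄ := by
        intro he
        have hz : dist (f ξ₂) (f ξ₄) = 0 := by rw [he, dist_self]
        exact hΩ ⟨feq _ _ (by linarith), he⟩
      have hA12 : ξ₁ ≠ ξ₂ := by
        intro he
        have hz : dist (f ξ₁) (f ξ₂) = 0 := by rw [he, dist_self]
        exact h13 (he.trans (feq _ _ (by linarith)))
      have hA23 : ξ₂ ≠ ξ₃ := by
        intro he
        have hz : dist (f ξ₂) (f ξ₃) = 0 := by rw [he, dist_self]
        exact h24 (he.trans (feq _ _ (by linarith)))
      have hA34 : ξ₃ ≠ ξ₄ := by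
        intro he
        have hz : dist (f ξ₃) (f ξ₄) = 0 := by rw [he, dist_self]
        have h41z : dist (f ξ₄) (f ξ₁) = 0 := by linarith
        exact h13 (by rw [he]; exact (feq _ _ h41z).symm)
      have hA41 : ξ₄ ≠ ξ₁ := by
        intro he
        have hz : dist (f ξ₄) (f ξ₁) = 0 := by rw [he, dist_self]
        have h12z : dist (f ξ₁) (f ξ₂) = 0 := by linarith
        exact h24 ((feq _ _ h12z).symm.trans he.symm)
      exact h ξ₁ ξ₂ ξ₃ ξ₄ hA12 h13 (Ne.symm hA41) hA23 h24 hA34 hA hB hC hd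
  · -- equivariance
    intro ξ₁ ξ₂ ξ₃ ξ₄ _
    have dc13 := dist_comm (f ξ₃) (f ξ₁)
    have dc43 := dist_comm (f ξ₄) (f ξ₃)
    have dc32 := dist_comm (f ξ₃) (f ξ₂)
    have dc21 := dist_comm (f ξ₂) (f ξ₁)
    have dc42 := dist_comm (f ξ₄) (f ξ₂)
    have dc14 := dist_comm (f ξ₁) (f ξ₄)
    constructor <;>
    · refine (WithLp.ext_iff 2).2 (Prod.ext ?_ ?_) <;>
      · ext i
        fin_cases i <;>
        · simp [testAlpha, omegaV, jV, wlpApply]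
          linarith [dc13, dc43, dc32, dc21, dc42, dc14]


end TetrahedraSetup
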